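/- Let \Omega = \{0,1,\dots,m-1\} with full-support measure \pi, and let f, g : \Omega^n \to \R be monotone functions. Define f_i(x) = E_{y \sim \pi^{\otimes(n-1)}}[f(y_1,\dots,y_{i-1}, x, y_{i+1},\dots,y_n)] for x \in \Omega, and similarly g_i. Then \sum_{i=1}^n (E[f_i g_i] - E[f_i] E[g_i]) = 0 if and only if there is a partition [n] = S \sqcup \bar{S} such that f depends only on coordinates in S and g depends only on coordinates in \bar{S}. -/
import Mathlib


/-- The one-variable average of `f` along coordinate `i`: `f_i(a) = E_y[f(y with y_i := a)]`,
the expectation taken with respect to the product measure with weights `w`. -/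
noncomputable def avg1 (m n : ℕ) (w : Fin m → ℝ) (f : (Fin n → Fin m) → ℝ)
    (i : Fin n) (a : Fin m) : ℝ :=
  ∑ y : Fin n → Fin m, (∏ j, w (y j)) * f (Function.update y i a)

section aux
variable {m n : ℕ} {w : Fin m → ℝ}

lemma update_mono {y : Fin n → Fin m} {i : Fin n} {a b : Fin m} (hab : a ≤ b) :
    Function.update y i a ≤ Function.update y i b := by
  intro j
  rcases eq_or_ne j i with rfl | h
  · simpa using hab
  · simp [Function.update_apply, h]

lemma prod_w_pos (hw : ∀ a, 0 < w a) (y : Fin n → Fin m) : 0 < ∏ j, w (y j) :=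
  Finset.prod_pos fun j _ => hw (y j)

/-- If `avg1 f i` is constant then (for monotone `f`, positive weights) `f` does not
depend on coordinate `i`. -/
lemma indep_of_avg_const (hw : ∀ a, 0 < w a) {f : (Fin n → Fin m) → ℝ} (hf : Monotone f)
    {i : Fin n} (h : ∀ a b, avg1 m n w f i a = avg1 m n w f i b) :
    ∀ (y : Fin n → Fin m) (a b : Fin m),
      f (Function.update y i a) = f (Function.update y i b) := by
  suffices H : ∀ a b : Fin m, a ≤ b → ∀ y : Fin n → Fin m,
      f (Function.update y i a) = f (Function.update y i b) by
    intro y a b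
    rcases le_total a b with hab | hab
    · exact H a b hab y
    · exact (H b a hab y).symm
  intro a b hab y
  have hzero : ∑ z : Fin n → Fin m,
      (∏ j, w (z j)) * (f (Function.update z i b) - f (Function.update z i a)) = 0 := by
    simp only [mul_sub, Finset.sum_sub_distrib]
    rw [show (∑ z : Fin n → Fin m, (∏ j, w (z j)) * f (Function.update z i b)) = avg1 m n w f i b from rfl,
        show (∑ z : Fin n → Fin m, (∏ j, w (z j)) * f (Function.update z i a)) = avg1 m n w f i a from rfl,
        h a b, sub_self]
  have hnn : ∀ z ∈ (Finset.univ : Finset (Fin n → Fin m)),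
      0 ≤ (∏ j, w (z j)) * (f (Function.update z i b) - f (Function.update z i a)) := by
    intro z _
    exact mul_nonneg (prod_w_pos hw z).le (sub_nonneg.2 (hf (update_mono hab)))
  have := (Finset.sum_eq_zero_iff_of_nonneg hnn).1 hzero y (Finset.mem_univ y)
  have h2 := mul_eq_zero.1 this
  rcases h2 with h2 | h2
  · exact absurd h2 (prod_w_pos hw y).ne'
  · linarith [sub_eq_zero.1 h2]

/-- If `f` does not depend on each coordinate outside `S` individually, then `f` depends
only on coordinates in `S`. -/
lemma depends_only_on {f : (Fin n → Fin m) → ℝ} {S : Set (Fin n)}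
    (h : ∀ i ∉ S, ∀ (y : Fin n → Fin m) (a b : Fin m),
      f (Function.update y i a) = f (Function.update y i b)) :
    ∀ x y : Fin n → Fin m, (∀ i ∈ S, x i = y i) → f x = f y := by
  suffices H : ∀ T : Finset (Fin n), ∀ x y : Fin n → Fin m,
      (∀ i, x i ≠ y i → i ∈ T) → (∀ i ∈ S, x i = y i) → f x = f y by
    intro x y hxy
    exact H Finset.univ x y (fun i _ => Finset.mem_univ i) hxy
  intro T
  induction T using Finset.induction_on with
  | empty =>
    intro x y hT _
    have : x = y := funext fun i => by_contra fun hne => absurd (hT i hne) (Finset.notMem_empty i)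
    rw [this]
  | @insert j T hj ih =>
    intro x y hT hS
    by_cases hxyj : x j = y j
    · refine ih x y (fun i hi => ?_) hS
      rcases Finset.mem_insert.1 (hT i hi) with rfl | h'
      · exact absurd hxyj hi
      · exact h'
    · have hjS : j ∉ S := fun hjS => hxyj (hS j hjS)
      have step : f x = f (Function.update x j (y j)) := by
        have := h j hjS x (x j) (y j)
        rwa [Function.update_eq_self] at this
      rw [step]
      refine ih (Function.update x j (y j)) y (fun i hi => ?_) (fun i hiS => ?_)
      · have hij : i ≠ j := fun hij => by
          subst hij; simp at hi
        rw [Function.update_apply, if_neg hij] at hi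
        rcases Finset.mem_insert.1 (hT i hi) with rfl | h'
        · exact absurd rfl hij
        · exact h'
      · have hij : i ≠ j := fun hij => by subst hij; exact hjS hiS
        rw [Function.update_apply, if_neg hij]
        exact hS i hiS

lemma const_or_const {F G : Fin m → ℝ} (hF : Monotone F) (hG : Monotone G)
    (h : ∀ a b, F a = F b ∨ G a = G b) :
    (∀ a b, F a = F b) ∨ (∀ a b, G a = G b) := by
  by_cases hc : ∀ a b, F a = F b
  · exact Or.inl hc
  right
  push_neg at hc
  obtain ⟨a₀, b₀, hab₀⟩ := hc
  obtain ⟨a, b, hab, hlt⟩ : ∃ a b : Fin m, a ≤ b ∧ F a < F b := by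
    rcases le_total a₀ b₀ with h' | h'
    · exact ⟨a₀, b₀, h', lt_of_le_of_ne (hF h') hab₀⟩
    · exact ⟨b₀, a₀, h', lt_of_le_of_ne (hF h') (Ne.symm hab₀)⟩
  have hGab : G a = G b := (h a b).resolve_left hlt.ne
  have key : ∀ c, G c = G a := by
    intro c
    rcases le_total c a with hca | hac
    · have hne : F c ≠ F b := ((hF hca).trans_lt hlt).ne
      exact ((h c b).resolve_left hne).trans hGab.symm
    · rcases le_total c b with hcb | hbc
      · exact le_antisymm (hGab ▸ hG hcb) (hG hac)
      · exact (h c a).resolve_left (hlt.trans_le (hF hbc)).ne'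
  intro c d
  rw [key c, key d]

lemma avg1_mono (hw : ∀ a, 0 < w a) {f : (Fin n → Fin m) → ℝ} (hf : Monotone f) (i : Fin n) :
    Monotone (avg1 m n w f i) := by
  intro a b hab
  refine Finset.sum_le_sum fun y _ => ?_
  exact mul_le_mul_of_nonneg_left (hf (update_mono hab)) (prod_w_pos hw y).le

lemma cov_id (hsum : ∑ a, w a = 1) (F G : Fin m → ℝ) :
    ∑ a, ∑ b, w a * w b * ((F a - F b) * (G a - G b)) =
    2 * ((∑ a, w a * (F a * G a)) - (∑ a, w a * F a) * (∑ a, w a * G a)) := by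
  simp only [show ∀ a b : Fin m, w a * w b * ((F a - F b) * (G a - G b)) =
      w a * (F a * G a) * w b - (w a * F a) * (w b * G b) - (w a * G a) * (w b * F b)
        + w a * (w b * (F b * G b)) from fun a b => by ring,
    Finset.sum_add_distrib, Finset.sum_sub_distrib, ← Finset.mul_sum, ← Finset.sum_mul, hsum]
  ring

lemma pair_nonneg {F G : Fin m → ℝ} (hF : Monotone F) (hG : Monotone G) (a b : Fin m) :
    0 ≤ (F a - F b) * (G a - G b) := by
  rcases le_total a b with hab | hab
  · rw [show (F a - F b) * (G a - G b) = (F b - F a) * (G b - G a) from by ring]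
    exact mul_nonneg (sub_nonneg.2 (hF hab)) (sub_nonneg.2 (hG hab))
  · exact mul_nonneg (sub_nonneg.2 (hF hab)) (sub_nonneg.2 (hG hab))

lemma term_zero_of_const (hm : 0 < m) (hsum : ∑ a, w a = 1) {F : Fin m → ℝ} (G : Fin m → ℝ)
    (hc : ∀ a b, F a = F b) :
    (∑ a, w a * (F a * G a)) - (∑ a, w a * F a) * (∑ a, w a * G a) = 0 := by
  set a₀ : Fin m := ⟨0, hm⟩
  have e1 : (∑ a, w a * (F a * G a)) = F a₀ * ∑ a, w a * G a := by
    rw [Finset.mul_sum]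
    exact Finset.sum_congr rfl fun a _ => by rw [hc a a₀]; ring
  have e2 : (∑ a, w a * F a) = F a₀ := by
    calc (∑ a, w a * F a) = ∑ a, w a * F a₀ :=
          Finset.sum_congr rfl fun a _ => by rw [hc a a₀]
      _ = (∑ a, w a) * F a₀ := by rw [Finset.sum_mul]
      _ = F a₀ := by rw [hsum, one_mul]
  rw [e1, e2]; ring

end aux

/-- For monotone `f, g` on `{0,…,m-1}^n` with full-support product measure,
`∑_i (E[f_i g_i] - E[f_i]E[g_i]) = 0` iff there is a partition `[n] = S ⊔ Sᶜ` such that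
`f` depends only on coordinates in `S` and `g` depends only on coordinates in `Sᶜ`. -/
theorem stmt6 (m n : ℕ) (w : Fin m → ℝ) (hw : ∀ a, 0 < w a) (hsum : ∑ a, w a = 1)
    (f g : (Fin n → Fin m) → ℝ) (hf : Monotone f) (hg : Monotone g) :
    (∑ i : Fin n,
      ((∑ a, w a * (avg1 m n w f i a * avg1 m n w g i a)) -
        (∑ a, w a * avg1 m n w f i a) * (∑ a, w a * avg1 m n w g i a))) = 0 ↔
    ∃ S : Set (Fin n),
      (∀ x y : Fin n → Fin m, (∀ i ∈ S, x i = y i) → f x = f y) ∧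
      (∀ x y : Fin n → Fin m, (∀ i ∉ S, x i = y i) → g x = g y) := by
  have hm : 0 < m := by
    rcases Nat.eq_zero_or_pos m with rfl | h
    · simp at hsum
    · exact h
  set F : Fin n → Fin m → ℝ := fun i => avg1 m n w f i with hF
  set G : Fin n → Fin m → ℝ := fun i => avg1 m n w g i with hG
  have hFm : ∀ i, Monotone (F i) := fun i => avg1_mono hw hf i
  have hGm : ∀ i, Monotone (G i) := fun i => avg1_mono hw hg i
  constructor
  · intro hzero
    -- each covariance term is nonnegative
    have tnn : ∀ i ∈ (Finset.univ : Finset (Fin n)),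
        0 ≤ (∑ a, w a * (F i a * G i a)) - (∑ a, w a * F i a) * (∑ a, w a * G i a) := by
      intro i _
      have h2 := cov_id (w := w) hsum (F i) (G i)
      have hdnn : 0 ≤ ∑ a, ∑ b, w a * w b * ((F i a - F i b) * (G i a - G i b)) := by
        refine Finset.sum_nonneg fun a _ => Finset.sum_nonneg fun b _ => ?_
        exact mul_nonneg (mul_nonneg (hw a).le (hw b).le) (pair_nonneg (hFm i) (hGm i) a b)
      linarith
    have each : ∀ i, (∑ a, w a * (F i a * G i a))
        - (∑ a, w a * F i a) * (∑ a, w a * G i a) = 0 :=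
      fun i => (Finset.sum_eq_zero_iff_of_nonneg tnn).1 hzero i (Finset.mem_univ i)
    -- for each i, F i is constant or G i is constant
    have key : ∀ i, (∀ a b, F i a = F i b) ∨ (∀ a b, G i a = G i b) := by
      intro i
      refine const_or_const (hFm i) (hGm i) fun a b => ?_
      have hd : ∑ a, ∑ b, w a * w b * ((F i a - F i b) * (G i a - G i b)) = 0 := by
        rw [cov_id (w := w) hsum (F i) (G i), each i]; ring
      have h1 := (Finset.sum_eq_zero_iff_of_nonneg (fun a _ =>
        Finset.sum_nonneg fun b _ => mul_nonneg (mul_nonneg (hw a).le (hw b).le)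
          (pair_nonneg (hFm i) (hGm i) a b))).1 hd a (Finset.mem_univ a)
      have h2 := (Finset.sum_eq_zero_iff_of_nonneg (fun b _ =>
        mul_nonneg (mul_nonneg (hw a).le (hw b).le)
          (pair_nonneg (hFm i) (hGm i) a b))).1 h1 b (Finset.mem_univ b)
      have h3 : (F i a - F i b) * (G i a - G i b) = 0 := by
        rcases mul_eq_zero.1 h2 with h | h
        · exact absurd h (mul_pos (hw a) (hw b)).ne'
        · exact h
      rcases mul_eq_zero.1 h3 with h | h
      · exact Or.inl (sub_eq_zero.1 h)
      · exact Or.inr (sub_eq_zero.1 h)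
    refine ⟨{i | ¬ ∀ a b, F i a = F i b}, ?_, ?_⟩
    · refine depends_only_on fun i hi => ?_
      have : ∀ a b, F i a = F i b := not_not.1 hi
      exact indep_of_avg_const hw hf this
    · refine depends_only_on fun i hi => ?_
      have hFc : ¬ ∀ a b, F i a = F i b := not_not.1 hi
      have : ∀ a b, G i a = G i b := (key i).resolve_left hFc
      exact indep_of_avg_const hw hg this
  · rintro ⟨S, hfS, hgS⟩
    refine Finset.sum_eq_zero fun i _ => ?_
    by_cases hi : i ∈ S
    · -- g does not depend on i, so G i is constant
      have hGc : ∀ a b, G i a = G i b := by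
        intro a b
        refine Finset.sum_congr rfl fun y _ => ?_
        congr 1
        refine hgS _ _ fun j hj => ?_
        have hij : j ≠ i := fun h => hj (h ▸ hi)
        simp [Function.update_apply, hij]
      have := term_zero_of_const hm hsum (F i) hGc
      calc (∑ a, w a * (F i a * G i a)) - (∑ a, w a * F i a) * (∑ a, w a * G i a)
          = (∑ a, w a * (G i a * F i a)) - (∑ a, w a * G i a) * (∑ a, w a * F i a) := by
            simp only [mul_comm]
        _ = 0 := this
    · have hFc : ∀ a b, F i a = F i b := by
        intro a b
        refine Finset.sum_congr rfl fun y _ => ?_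
        congr 1
        refine hfS _ _ fun j hj => ?_
        have hij : j ≠ i := fun h => hi (h ▸ hj)
        simp [Function.update_apply, hij]
      exact term_zero_of_const hm hsum (G i) hFc
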